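/- arXiv:1701.04196 — 2 statements merged into one kernel-verified Lean document; each statement's English description precedes it below -/
import Mathlib

section
/- Suppose Y is a T₀ space. The map ι : Y → O(Z∞ × Y) sending y to the quasi-orbit O((0, y)) is injective, continuous, and open onto its image; its image is the set of quasi-orbits of points with first coordinate in ℤ, and is open and dense in O(Z∞ × Y). Moreover, the map sending the quasi-orbit O_Y(y) ∈ O(Y) (for the action n·y = σⁿ(y) on Y) to O((∞, y)) is well defined and is a homeomorphism of O(Y) onto the complement of ι(Y) in O(Z∞ × Y), and this complement is closed. -/
open Filter Topology

/-- The order topology on `Z∞ = ℤ ∪ {∞}` (formally `WithTop ℤ`): every `n ∈ ℤ` is isolated,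
and the sets `J_n = {k : ℤ | n ≤ k} ∪ {∞}` form a neighborhood basis at `∞`. -/
noncomputable instance : TopologicalSpace (WithTop ℤ) := Preorder.topology (WithTop ℤ)

instance : OrderTopology (WithTop ℤ) := ⟨rfl⟩

/-- The integer power `σⁿ` (`n : ℤ`) of a homeomorphism `σ : Y ≃ₜ Y`, as a function. -/
def sigmaPow {Y : Type*} [TopologicalSpace Y] (σ : Y ≃ₜ Y) (n : ℤ) : Y → Y :=
  fun y => (σ.toEquiv ^ n) y

/-- The action of `ℤ` on `Z∞ × Y`: `n·(m, y) = (m + n, y)` for `m ∈ ℤ`, and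
`n·(∞, y) = (∞, σⁿ(y))`. -/
def actZ {Y : Type*} [TopologicalSpace Y] (σ : Y ≃ₜ Y) (n : ℤ) (p : WithTop ℤ × Y) :
    WithTop ℤ × Y :=
  (p.1.map (· + n), if p.1 = ⊤ then sigmaPow σ n p.2 else p.2)

/-- The quasi-orbit equivalence relation for an action `act` of `ℤ` on a topological space
`X`: `x ≈ y` iff the closures of the `ℤ`-orbits of `x` and `y` coincide. -/
def qSetoid {X : Type*} [TopologicalSpace X] (act : ℤ → X → X) : Setoid X :=
  ⟨fun x y =>
      closure (Set.range fun n : ℤ => act n x) = closure (Set.range fun n : ℤ => act n y),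
    ⟨fun _ => rfl, Eq.symm, Eq.trans⟩⟩

/-- The map `ι : Y → O(Z∞ × Y)` sending `y` to the quasi-orbit of `((0 : Z∞), y)`. -/
noncomputable def iotaO {Y : Type*} [TopologicalSpace Y] (σ : Y ≃ₜ Y) :
    Y → Quotient (qSetoid (actZ σ)) :=
  fun y => Quotient.mk (qSetoid (actZ σ)) (((0 : ℤ) : WithTop ℤ), y)

/- ### Auxiliary lemmas -/

lemma QO_isOpen_neTop : IsOpen {a : WithTop ℤ | a ≠ ⊤} := by
  have : {a : WithTop ℤ | a ≠ ⊤} = Set.Iio ⊤ := by ext a; simp [lt_top_iff_ne_top]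
  rw [this]; exact isOpen_Iio

lemma QO_closure_range_coe : closure (Set.range ((↑) : ℤ → WithTop ℤ)) = Set.univ := by
  apply Set.eq_univ_of_forall
  intro x
  rcases eq_or_ne x ⊤ with rfl | hx
  · rw [mem_closure_iff_nhds_basis nhds_top_basis]
    intro a ha
    obtain ⟨k, rfl⟩ := WithTop.ne_top_iff_exists.mp ha.ne
    exact ⟨↑(k+1), Set.mem_range_self _, Set.mem_Ioi.mpr (by exact_mod_cast lt_add_one k)⟩
  · obtain ⟨k, rfl⟩ := WithTop.ne_top_iff_exists.mp hx
    exact subset_closure (Set.mem_range_self _)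

lemma QO_closure_neTop : closure {a : WithTop ℤ | a ≠ ⊤} = Set.univ := by
  apply Set.eq_univ_of_univ_subset
  rw [← QO_closure_range_coe]
  apply closure_mono
  rintro a ⟨k, rfl⟩
  exact WithTop.coe_ne_top

section Aux
variable {Y : Type*} [TopologicalSpace Y] (σ : Y ≃ₜ Y)

lemma QO_actZ_coe (n m : ℤ) (y : Y) :
    actZ σ n ((m : WithTop ℤ), y) = ((↑(m + n) : WithTop ℤ), y) := by
  simp [actZ, WithTop.map_coe]

lemma QO_actZ_top (n : ℤ) (y : Y) :
    actZ σ n ((⊤ : WithTop ℤ), y) = ((⊤ : WithTop ℤ), sigmaPow σ n y) := by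
  simp [actZ]

lemma QO_orbit_coe (m : ℤ) (y : Y) :
    (Set.range fun n : ℤ => actZ σ n ((m : WithTop ℤ), y)) =
      (Set.range ((↑) : ℤ → WithTop ℤ)) ×ˢ {y} := by
  ext ⟨a, b⟩
  simp only [Set.mem_range, Set.mem_prod, Set.mem_singleton_iff, QO_actZ_coe, Prod.mk.injEq]
  constructor
  · rintro ⟨n, h1, h2⟩
    exact ⟨⟨m + n, h1⟩, h2.symm⟩
  · rintro ⟨⟨k, rfl⟩, rfl⟩
    exact ⟨k - m, by rw [show m + (k - m) = k from by ring], rfl⟩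

lemma QO_orbit_top (y : Y) :
    (Set.range fun n : ℤ => actZ σ n ((⊤ : WithTop ℤ), y)) =
      ({⊤} : Set (WithTop ℤ)) ×ˢ Set.range (fun n : ℤ => sigmaPow σ n y) := by
  ext ⟨a, b⟩
  simp only [Set.mem_range, Set.mem_prod, Set.mem_singleton_iff, QO_actZ_top, Prod.mk.injEq]
  constructor
  · rintro ⟨n, h1, h2⟩
    exact ⟨h1.symm, n, h2⟩
  · rintro ⟨rfl, n, rfl⟩
    exact ⟨n, rfl, rfl⟩

lemma QO_closure_orbit_coe (m : ℤ) (y : Y) :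
    closure (Set.range fun n : ℤ => actZ σ n ((m : WithTop ℤ), y)) =
      (Set.univ : Set (WithTop ℤ)) ×ˢ closure {y} := by
  rw [QO_orbit_coe, closure_prod_eq, QO_closure_range_coe]

lemma QO_closure_orbit_top (y : Y) :
    closure (Set.range fun n : ℤ => actZ σ n ((⊤ : WithTop ℤ), y)) =
      ({⊤} : Set (WithTop ℤ)) ×ˢ closure (Set.range fun n : ℤ => sigmaPow σ n y) := by
  rw [QO_orbit_top, closure_prod_eq, isClosed_singleton.closure_eq]

lemma QO_rel_coe_coe [T0Space Y] {m m' : ℤ} {y y' : Y} :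
    (qSetoid (actZ σ)).r ((m : WithTop ℤ), y) ((m' : WithTop ℤ), y') ↔ y = y' := by
  show closure _ = closure _ ↔ _
  rw [QO_closure_orbit_coe, QO_closure_orbit_coe]
  constructor
  · intro h
    have h2 : closure ({y} : Set Y) = closure {y'} := by
      ext b
      have := Set.ext_iff.mp h (⊤, b)
      simpa using this
    exact (inseparable_iff_closure_eq.mpr h2).eq
  · rintro rfl; rfl

lemma QO_rel_coe_top {m : ℤ} {y y' : Y} :
    ¬ (qSetoid (actZ σ)).r ((m : WithTop ℤ), y) ((⊤ : WithTop ℤ), y') := by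
  show ¬ closure _ = closure _
  rw [QO_closure_orbit_coe, QO_closure_orbit_top]
  intro h
  have hmem : (((0 : ℤ) : WithTop ℤ), y) ∈
      ({⊤} : Set (WithTop ℤ)) ×ˢ closure (Set.range fun n : ℤ => sigmaPow σ n y') := by
    rw [← h]
    exact ⟨Set.mem_univ _, subset_closure rfl⟩
  exact WithTop.coe_ne_top (Set.mem_singleton_iff.mp hmem.1)

lemma QO_rel_top_top {y y' : Y} :
    (qSetoid (actZ σ)).r ((⊤ : WithTop ℤ), y) ((⊤ : WithTop ℤ), y') ↔
      closure (Set.range fun n : ℤ => sigmaPow σ n y) =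
        closure (Set.range fun n : ℤ => sigmaPow σ n y') := by
  show closure _ = closure _ ↔ _
  rw [QO_closure_orbit_top, QO_closure_orbit_top]
  constructor
  · intro h
    ext b
    have := Set.ext_iff.mp h (⊤, b)
    simpa using this
  · intro h; rw [h]

end Aux

/-- For a T₀ space `Y`: `ι : Y → O(Z∞ × Y)`, `y ↦ O((0, y))`, is injective, continuous, and
open onto its image; its image is the set of quasi-orbits of points with first coordinate in
`ℤ` and is open and dense. Moreover `O_Y(y) ↦ O((∞, y))` is well defined and is a
homeomorphism of `O(Y)` onto the complement of `ι(Y)`, which is closed. -/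
theorem quasiOrbitSpace_actZ {Y : Type*} [TopologicalSpace Y] [T0Space Y] (σ : Y ≃ₜ Y) :
    Function.Injective (iotaO σ) ∧
    Continuous (iotaO σ) ∧
    IsOpenMap (iotaO σ) ∧
    Set.range (iotaO σ) =
      {q : Quotient (qSetoid (actZ σ)) | ∃ (m : ℤ) (y : Y),
        q = Quotient.mk (qSetoid (actZ σ)) ((m : WithTop ℤ), y)} ∧
    IsOpen (Set.range (iotaO σ)) ∧
    Dense (Set.range (iotaO σ)) ∧
    ∃ j : Quotient (qSetoid (fun (n : ℤ) (y : Y) => sigmaPow σ n y)) →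
        Quotient (qSetoid (actZ σ)),
      (∀ y : Y,
        j (Quotient.mk (qSetoid (fun (n : ℤ) (y : Y) => sigmaPow σ n y)) y) =
          Quotient.mk (qSetoid (actZ σ)) ((⊤ : WithTop ℤ), y)) ∧
      Topology.IsEmbedding j ∧
      Set.range j = (Set.range (iotaO σ))ᶜ ∧
      IsClosed ((Set.range (iotaO σ))ᶜ) := by
  -- preimage of an image under ι
  have hpre : ∀ U : Set Y,
      Quotient.mk (qSetoid (actZ σ)) ⁻¹' (iotaO σ '' U) = {a : WithTop ℤ | a ≠ ⊤} ×ˢ U := by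
    intro U
    ext ⟨a, b⟩
    simp only [Set.mem_preimage, Set.mem_image, Set.mem_prod, Set.mem_setOf_eq, iotaO]
    constructor
    · rintro ⟨y, hy, h⟩
      rcases eq_or_ne a ⊤ with rfl | ha
      · exact absurd (Quotient.exact h) (QO_rel_coe_top σ)
      · obtain ⟨m, rfl⟩ := WithTop.ne_top_iff_exists.mp ha
        have hyb := (QO_rel_coe_coe σ).mp (Quotient.exact h)
        exact ⟨WithTop.coe_ne_top, hyb ▸ hy⟩
    · rintro ⟨ha, hb⟩
      obtain ⟨m, rfl⟩ := WithTop.ne_top_iff_exists.mp ha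
      exact ⟨b, hb, Quotient.sound ((QO_rel_coe_coe σ).mpr rfl)⟩
  have hinj : Function.Injective (iotaO σ) := by
    intro y y' h
    exact (QO_rel_coe_coe σ).mp (Quotient.exact h)
  have hcont : Continuous (iotaO σ) := by
    show Continuous fun y : Y => Quotient.mk (qSetoid (actZ σ)) (((0 : ℤ) : WithTop ℤ), y)
    exact continuous_quotient_mk'.comp (Continuous.prodMk_right _)
  have homap : IsOpenMap (iotaO σ) := by
    intro U hU
    have : IsOpen (Quotient.mk (qSetoid (actZ σ)) ⁻¹' (iotaO σ '' U)) := by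
      rw [hpre]; exact QO_isOpen_neTop.prod hU
    exact this
  have hrange : Set.range (iotaO σ) =
      {q : Quotient (qSetoid (actZ σ)) | ∃ (m : ℤ) (y : Y),
        q = Quotient.mk (qSetoid (actZ σ)) ((m : WithTop ℤ), y)} := by
    ext q
    constructor
    · rintro ⟨y, rfl⟩
      exact ⟨0, y, rfl⟩
    · rintro ⟨m, y, rfl⟩
      exact ⟨y, Quotient.sound ((QO_rel_coe_coe σ).mpr rfl)⟩
  have hopen : IsOpen (Set.range (iotaO σ)) := by
    rw [← Set.image_univ]
    exact homap _ isOpen_univ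
  have hdense : Dense (Set.range (iotaO σ)) := by
    rw [dense_iff_closure_eq]
    apply Set.eq_univ_of_forall
    intro q
    refine Quotient.ind (fun x => ?_) q
    obtain ⟨a, b⟩ := x
    rcases eq_or_ne a ⊤ with rfl | ha
    · have hclosed : IsClosed (Quotient.mk (qSetoid (actZ σ)) ⁻¹' closure (Set.range (iotaO σ))) :=
        isClosed_closure.preimage continuous_quotient_mk'
      have hsub : {a : WithTop ℤ | a ≠ ⊤} ×ˢ (Set.univ : Set Y) ⊆
          Quotient.mk (qSetoid (actZ σ)) ⁻¹' closure (Set.range (iotaO σ)) := by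
        rw [← hpre Set.univ]
        exact Set.preimage_mono (by rw [Set.image_univ]; exact subset_closure)
      have hcl := closure_minimal hsub hclosed
      apply hcl
      rw [closure_prod_eq, closure_univ, QO_closure_neTop]
      exact ⟨trivial, trivial⟩
    · obtain ⟨m, rfl⟩ := WithTop.ne_top_iff_exists.mp ha
      have : Quotient.mk (qSetoid (actZ σ)) ((↑m : WithTop ℤ), b) = iotaO σ b :=
        Quotient.sound ((QO_rel_coe_coe σ).mpr rfl)
      rw [this]
      exact subset_closure ⟨b, rfl⟩
  refine ⟨hinj, hcont, homap, hrange, hopen, hdense, ?_⟩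
  refine ⟨Quotient.lift (fun y => Quotient.mk (qSetoid (actZ σ)) ((⊤ : WithTop ℤ), y))
      (fun y y' h => Quotient.sound ((QO_rel_top_top σ).mpr h)), fun y => rfl, ?_, ?_, hopen.isClosed_compl⟩
  · -- embedding
    constructor
    · constructor
      refine le_antisymm ?_ ?_
      · exact continuous_iff_le_induced.mp
          (Continuous.quotient_lift (continuous_quotient_mk'.comp (Continuous.prodMk_right _)) _)
      · rw [TopologicalSpace.le_def]
        intro U hU
        -- U open in O(Y); produce a saturated open set in X
        set W : Set Y := Quotient.mk (qSetoid (fun (n : ℤ) (y : Y) => sigmaPow σ n y)) ⁻¹' U with hW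
        set V : Set (Quotient (qSetoid (actZ σ))) :=
          Quotient.mk (qSetoid (actZ σ)) '' ((Set.univ : Set (WithTop ℤ)) ×ˢ W) with hV
        have hsat : Quotient.mk (qSetoid (actZ σ)) ⁻¹' V =
            (Set.univ : Set (WithTop ℤ)) ×ˢ W := by
          ext ⟨a, b⟩
          simp only [hV, Set.mem_preimage, Set.mem_image, Set.mem_prod, Set.mem_univ, true_and]
          constructor
          · rintro ⟨⟨c, d⟩, hd, h⟩
            rcases eq_or_ne c ⊤ with rfl | hc
            · rcases eq_or_ne a ⊤ with rfl | ha
              · have hr := (QO_rel_top_top σ).mp (Quotient.exact h)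
                have heq : Quotient.mk (qSetoid (fun (n : ℤ) (y : Y) => sigmaPow σ n y)) d =
                    Quotient.mk (qSetoid (fun (n : ℤ) (y : Y) => sigmaPow σ n y)) b :=
                  Quotient.sound hr
                show Quotient.mk _ b ∈ U
                rw [← heq]
                exact hd
              · obtain ⟨m, rfl⟩ := WithTop.ne_top_iff_exists.mp ha
                exact absurd (Quotient.exact h.symm) (QO_rel_coe_top σ)
            · obtain ⟨m, rfl⟩ := WithTop.ne_top_iff_exists.mp hc
              rcases eq_or_ne a ⊤ with rfl | ha
              · exact absurd (Quotient.exact h) (QO_rel_coe_top σ)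
              · obtain ⟨k, rfl⟩ := WithTop.ne_top_iff_exists.mp ha
                have hdb := (QO_rel_coe_coe σ).mp (Quotient.exact h)
                exact hdb ▸ hd
          · intro hb
            exact ⟨(a, b), hb, rfl⟩
        have hVopen : IsOpen V := by
          have : IsOpen (Quotient.mk (qSetoid (actZ σ)) ⁻¹' V) := by
            rw [hsat]
            exact isOpen_univ.prod (hU.preimage continuous_quotient_mk')
          exact this
        refine ⟨V, hVopen, ?_⟩
        ext q
        obtain ⟨y, rfl⟩ := Quotient.exists_rep q
        show Quotient.mk (qSetoid (actZ σ)) ((⊤ : WithTop ℤ), y) ∈ V ↔ _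
        have : Quotient.mk (qSetoid (actZ σ)) ((⊤ : WithTop ℤ), y) ∈ V ↔
            ((⊤ : WithTop ℤ), y) ∈ (Set.univ : Set (WithTop ℤ)) ×ˢ W := by
          rw [← hsat]; exact Iff.rfl
        rw [this]
        simp [hW]
    · -- injective
      intro q1 q2 h
      obtain ⟨y, rfl⟩ := Quotient.exists_rep q1
      obtain ⟨y', rfl⟩ := Quotient.exists_rep q2
      exact Quotient.sound ((QO_rel_top_top σ).mp (Quotient.exact h))
  · -- range j = complement of range ι
    ext q
    constructor
    · rintro ⟨p, rfl⟩
      obtain ⟨y, rfl⟩ := Quotient.exists_rep p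
      rintro ⟨y', hy'⟩
      exact QO_rel_coe_top σ (Quotient.exact hy')
    · intro hq
      obtain ⟨⟨a, b⟩, rfl⟩ := Quotient.exists_rep q
      rcases eq_or_ne a ⊤ with rfl | ha
      · exact ⟨Quotient.mk _ b, rfl⟩
      · obtain ⟨m, rfl⟩ := WithTop.ne_top_iff_exists.mp ha
        exact absurd ⟨b, Quotient.sound ((QO_rel_coe_coe σ).mpr rfl)⟩ hq
end

section
/- Suppose Y is a T₀ space, and let ι : Y → O(Z∞ × Y), y ↦ O((0, y)), and ĵ : O(Y) → O(Z∞ × Y), O_Y(y) ↦ O((∞, y)), where O(Y) is the quasi-orbit space of Y for the action n·y = σⁿ(y). Then every open subset S of O(Z∞ × Y) can be written as S = ι(U) ∪ ĵ(W) where U is an open subset of Y, W is an open subset of O(Y), and U is nonempty whenever W is nonempty. -/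
open Filter Topology

section Aux
variable {Y : Type*} [TopologicalSpace Y] (σ : Y ≃ₜ Y)

lemma actZ_coe (n m : ℤ) (y : Y) :
    actZ σ n ((m : WithTop ℤ), y) = (((m + n : ℤ) : WithTop ℤ), y) := by
  simp [actZ, WithTop.coe_ne_top]

lemma actZ_top (n : ℤ) (y : Y) :
    actZ σ n ((⊤ : WithTop ℤ), y) = (⊤, sigmaPow σ n y) := by
  simp [actZ]

lemma range_actZ_coe (m : ℤ) (y : Y) :
    (Set.range fun n : ℤ => actZ σ n ((m : WithTop ℤ), y)) =
      Set.range fun n : ℤ => ((n : WithTop ℤ), y) := by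
  ext p
  simp only [Set.mem_range, actZ_coe]
  constructor
  · rintro ⟨n, rfl⟩; exact ⟨m + n, rfl⟩
  · rintro ⟨n, rfl⟩; exact ⟨n - m, by simp⟩

lemma mk_coe_eq (m : ℤ) (y : Y) :
    Quotient.mk (qSetoid (actZ σ)) ((m : WithTop ℤ), y) =
      Quotient.mk (qSetoid (actZ σ)) (((0 : ℤ) : WithTop ℤ), y) :=
  Quotient.sound (by
    show closure _ = closure _
    rw [range_actZ_coe, range_actZ_coe])

lemma range_actZ_top (y : Y) :
    (Set.range fun n : ℤ => actZ σ n ((⊤ : WithTop ℤ), y)) =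
      {(⊤ : WithTop ℤ)} ×ˢ (Set.range fun n : ℤ => sigmaPow σ n y) := by
  ext ⟨a, b⟩
  simp only [Set.mem_range, actZ_top, Prod.mk.injEq, Set.mem_prod, Set.mem_singleton_iff]
  constructor
  · rintro ⟨n, rfl, rfl⟩; exact ⟨rfl, n, rfl⟩
  · rintro ⟨rfl, n, rfl⟩; exact ⟨n, rfl, rfl⟩

lemma mk_top_eq (y y' : Y)
    (h : closure (Set.range fun n : ℤ => sigmaPow σ n y) =
      closure (Set.range fun n : ℤ => sigmaPow σ n y')) :
    Quotient.mk (qSetoid (actZ σ)) ((⊤ : WithTop ℤ), y) =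
      Quotient.mk (qSetoid (actZ σ)) ((⊤ : WithTop ℤ), y') :=
  Quotient.sound (by
    show closure _ = closure _
    rw [range_actZ_top, range_actZ_top, closure_prod_eq, closure_prod_eq, h])

lemma exists_coe_mem_of_top_mem {O : Set (WithTop ℤ)} (hO : IsOpen O) (h : ⊤ ∈ O) :
    ∃ n : ℤ, (n : WithTop ℤ) ∈ O := by
  obtain ⟨a, ha, haO⟩ := (nhds_top_basis.mem_iff).mp (hO.mem_nhds h)
  lift a to ℤ using ha.ne
  refine ⟨a + 1, haO ?_⟩
  simp only [Set.mem_Ioi]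
  exact_mod_cast lt_add_one a

end Aux

/-- For a T₀ space `Y`: every open subset `S` of `O(Z∞ × Y)` can be written as
`S = ι(U) ∪ ĵ(W)` with `U ⊆ Y` open, `W ⊆ O(Y)` open, and `U` nonempty whenever `W` is
nonempty. -/
theorem open_sets_of_quasiOrbitSpace {Y : Type*} [TopologicalSpace Y] [T0Space Y]
    (σ : Y ≃ₜ Y)
    (j : Quotient (qSetoid (fun (n : ℤ) (y : Y) => sigmaPow σ n y)) →
      Quotient (qSetoid (actZ σ)))
    (hj : ∀ y : Y,
      j (Quotient.mk (qSetoid (fun (n : ℤ) (y : Y) => sigmaPow σ n y)) y) =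
        Quotient.mk (qSetoid (actZ σ)) ((⊤ : WithTop ℤ), y)) :
    ∀ S : Set (Quotient (qSetoid (actZ σ))), IsOpen S →
      ∃ (U : Set Y) (W : Set (Quotient (qSetoid (fun (n : ℤ) (y : Y) => sigmaPow σ n y)))),
        IsOpen U ∧ IsOpen W ∧ S = iotaO σ '' U ∪ j '' W ∧ (W.Nonempty → U.Nonempty) := by
  intro S hS
  have hcont : ∀ m : WithTop ℤ, Continuous fun y : Y =>
      Quotient.mk (qSetoid (actZ σ)) (m, y) :=
    fun m => continuous_quot_mk.comp (Continuous.prodMk_right m)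
  have hiota : ∀ y : Y, iotaO σ y = Quotient.mk (qSetoid (actZ σ)) (((0:ℤ) : WithTop ℤ), y) :=
    fun _ => rfl
  refine ⟨iotaO σ ⁻¹' S,
    Quotient.mk (qSetoid (fun (n : ℤ) (y : Y) => sigmaPow σ n y)) ''
      {y : Y | Quotient.mk (qSetoid (actZ σ)) ((⊤ : WithTop ℤ), y) ∈ S},
    ?_, ?_, ?_, ?_⟩
  · -- U open
    have : IsOpen {y : Y | Quotient.mk (qSetoid (actZ σ)) (((0:ℤ) : WithTop ℤ), y) ∈ S} :=
      hS.preimage (hcont _)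
    exact this
  · -- W open
    have htWopen : IsOpen {y : Y | Quotient.mk (qSetoid (actZ σ)) ((⊤ : WithTop ℤ), y) ∈ S} :=
      hS.preimage (hcont _)
    have hsat : Quotient.mk (qSetoid (fun (n : ℤ) (y : Y) => sigmaPow σ n y)) ⁻¹'
        (Quotient.mk (qSetoid (fun (n : ℤ) (y : Y) => sigmaPow σ n y)) ''
          {y : Y | Quotient.mk (qSetoid (actZ σ)) ((⊤ : WithTop ℤ), y) ∈ S}) =
        {y : Y | Quotient.mk (qSetoid (actZ σ)) ((⊤ : WithTop ℤ), y) ∈ S} := by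
      ext y'
      simp only [Set.mem_preimage, Set.mem_image, Set.mem_setOf_eq]
      constructor
      · rintro ⟨y, hy, hyy'⟩
        have hrel : closure (Set.range fun n : ℤ => sigmaPow σ n y) =
            closure (Set.range fun n : ℤ => sigmaPow σ n y') := Quotient.exact hyy'
        rw [← mk_top_eq σ y y' hrel]
        exact hy
      · intro hy'; exact ⟨y', hy', rfl⟩
    show IsOpen[TopologicalSpace.coinduced
      (Quotient.mk (qSetoid (fun (n : ℤ) (y : Y) => sigmaPow σ n y))) _] _
    rw [isOpen_coinduced, hsat]
    exact htWopen
  · -- S = ι(U) ∪ j(W)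
    apply Set.Subset.antisymm
    · rintro s hs
      obtain ⟨⟨m, y⟩, rfl⟩ := Quotient.exists_rep s
      cases m using WithTop.recTopCoe with
      | top =>
        right
        exact ⟨Quotient.mk _ y, ⟨y, hs, rfl⟩, hj y⟩
      | coe m =>
        left
        refine ⟨y, ?_, (mk_coe_eq σ m y).symm⟩
        show iotaO σ y ∈ S
        rw [hiota, ← mk_coe_eq σ m y]
        exact hs
    · rintro s (⟨y, hy, rfl⟩ | ⟨w, ⟨y, hy, rfl⟩, rfl⟩)
      · exact hy
      · rw [hj y]; exact hy
  · -- nonemptiness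
    rintro ⟨w, y, hy, rfl⟩
    have hO : IsOpen {m : WithTop ℤ | Quotient.mk (qSetoid (actZ σ)) (m, y) ∈ S} :=
      hS.preimage (continuous_quot_mk.comp (Continuous.prodMk_left y))
    obtain ⟨n, hn⟩ := exists_coe_mem_of_top_mem hO hy
    refine ⟨y, ?_⟩
    show iotaO σ y ∈ S
    rw [hiota, ← mk_coe_eq σ n y]
    exact hn
end
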